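/- Let 0 < τ₁ < ⋯ < τ_M ≤ 1, Q the collocation matrix, and Q_{Δ,m} = diag(τ₁/m, …, τ_M/m) for m = 1, …, M. Then the product (I − Q_{Δ,M}⁻¹Q)(I − Q_{Δ,M−1}⁻¹Q) ⋯ (I − Q_{Δ,1}⁻¹Q) equals the zero matrix. -/

import Mathlib

open Polynomial Matrix Finset

noncomputable def collMat {M : ℕ} (τ : Fin M → ℝ) : Matrix (Fin M) (Fin M) ℝ :=
  Matrix.of fun i j => ∫ s in (0:ℝ)..(τ i), (Lagrange.basis Finset.univ τ j).eval s

lemma collMat_mulVec_pow {M : ℕ} (τ : Fin M → ℝ) (hmono : StrictMono τ) {n : ℕ} (hn : n < M) :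
    collMat τ *ᵥ (fun i => τ i ^ n) = fun i => τ i ^ (n + 1) / (n + 1) := by
  have hinj : Set.InjOn τ (Finset.univ : Finset (Fin M)) := fun a _ b _ h => hmono.injective h
  have hX : (X ^ n : ℝ[X]) = Lagrange.interpolate Finset.univ τ (fun j => τ j ^ n) := by
    have hdeg : (X ^ n : ℝ[X]).degree < (Finset.univ : Finset (Fin M)).card := by
      simpa [Polynomial.degree_X_pow] using (Nat.cast_lt.mpr hn : (n : WithBot ℕ) < M)
    simpa using Lagrange.eq_interpolate hinj hdeg
  funext i
  have hswap : ∀ j : Fin M,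
      (∫ s in (0:ℝ)..(τ i), (Lagrange.basis Finset.univ τ j).eval s) * τ j ^ n
        = ∫ s in (0:ℝ)..(τ i), ((C (τ j ^ n) * Lagrange.basis Finset.univ τ j).eval s) := by
    intro j
    rw [← intervalIntegral.integral_mul_const]
    congr 1; funext s; simp [mul_comm]
  have : (collMat τ *ᵥ (fun i => τ i ^ n)) i
      = ∫ s in (0:ℝ)..(τ i), (Lagrange.interpolate Finset.univ τ (fun j => τ j ^ n)).eval s := by
    simp only [mulVec, dotProduct, collMat, Matrix.of_apply]
    rw [Finset.sum_congr rfl (fun j _ => hswap j),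
      ← intervalIntegral.integral_finset_sum]
    · congr 1; funext s
      simp [Lagrange.interpolate, Polynomial.eval_finset_sum]
    · intro j _
      exact Continuous.intervalIntegrable (Polynomial.continuous _) _ _
  rw [this, ← hX]
  simp [integral_pow]

lemma factor_mulVec {M : ℕ} (τ : Fin M → ℝ) (hmono : StrictMono τ) (hpos : ∀ i, 0 < τ i)
    (k n : ℕ) (hn : n < M) :
    (1 - (Matrix.diagonal fun i => τ i / (k + 1 : ℕ))⁻¹ * collMat τ) *ᵥ (fun i => τ i ^ n)
      = (1 - ((k : ℝ) + 1) / (n + 1)) • (fun i => τ i ^ n) := by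
  have hd : (Matrix.diagonal fun i => τ i / (k + 1 : ℕ))⁻¹
      = Matrix.diagonal fun i => ((k : ℝ) + 1) / τ i := by
    apply Matrix.inv_eq_right_inv
    rw [Matrix.diagonal_mul_diagonal]
    ext i j
    rcases eq_or_ne i j with rfl | h
    · have hτ : τ i ≠ 0 := (hpos i).ne'
      have hk : ((k : ℝ) + 1) ≠ 0 := by positivity
      rw [Matrix.diagonal_apply_eq, Matrix.one_apply_eq]
      field_simp
      simp
    · rw [Matrix.diagonal_apply_ne _ h, Matrix.one_apply_ne h]
  rw [hd, Matrix.sub_mulVec, Matrix.one_mulVec, ← Matrix.mulVec_mulVec,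
    collMat_mulVec_pow τ hmono hn]
  funext i
  have hτ : τ i ≠ 0 := (hpos i).ne'
  have hn1 : ((n : ℝ) + 1) ≠ 0 := by positivity
  simp only [Matrix.mulVec_diagonal, Pi.sub_apply, Pi.smul_apply, smul_eq_mul]
  field_simp
  ring

/-- Theorem 2.8, MIN-SR-FLEX:
`(I - Q_{Δ,M}⁻¹Q)(I - Q_{Δ,M-1}⁻¹Q)⋯(I - Q_{Δ,1}⁻¹Q) = 0`. -/
theorem minSRFLEX_product_zero (M : ℕ) (hM : 1 ≤ M) (τ : Fin M → ℝ) (hmono : StrictMono τ)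
    (hpos : ∀ i, 0 < τ i) (h1 : ∀ i, τ i ≤ 1) :
    (((List.range M).reverse.map (fun k =>
        1 - (Matrix.diagonal fun i => τ i / (k + 1 : ℕ))⁻¹ * collMat τ)).prod :
      Matrix (Fin M) (Fin M) ℝ) = 0 := by
  set f : ℕ → Matrix (Fin M) (Fin M) ℝ :=
    fun k => 1 - (Matrix.diagonal fun i => τ i / (k + 1 : ℕ))⁻¹ * collMat τ with hf
  set P : Matrix (Fin M) (Fin M) ℝ := ((List.range M).reverse.map f).prod with hP
  -- P annihilates each power vector
  have key : ∀ (L : List ℕ) (n : ℕ), n < M →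
      ((L.map f).prod) *ᵥ (fun i => τ i ^ n)
        = ((L.map (fun (k : ℕ) => 1 - ((k : ℝ) + 1) / (n + 1))).prod) • (fun i => τ i ^ n) := by
    intro L n hn
    induction L with
    | nil => simp
    | cons k L ih =>
      simp only [List.map_cons, List.prod_cons]
      rw [← Matrix.mulVec_mulVec, ih, Matrix.mulVec_smul,
        factor_mulVec τ hmono hpos k n hn, smul_smul, mul_comm]
  have hPv : ∀ n, n < M → P *ᵥ (fun i => τ i ^ n) = 0 := by
    intro n hn
    rw [hP, key _ n hn]
    have h0 : (0 : ℝ) ∈ ((List.range M).reverse.map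
        (fun (k : ℕ) => 1 - ((k : ℝ) + 1) / (n + 1))) := by
      refine List.mem_map.mpr ⟨n, by simp [List.mem_reverse, List.mem_range, hn], ?_⟩
      have hn1 : ((n : ℝ) + 1) ≠ 0 := by positivity
      field_simp
      simp
    rw [List.prod_eq_zero h0, zero_smul]
  -- multiply by Vandermonde
  have hmul : P * Matrix.vandermonde τ = 0 := by
    ext i j
    have := congrFun (hPv j j.2) i
    simpa [Matrix.mul_apply, Matrix.vandermonde, Matrix.mulVec, dotProduct] using this
  have hdet : IsUnit (Matrix.vandermonde τ).det := by
    rw [Matrix.det_vandermonde]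
    refine (Finset.prod_ne_zero_iff.mpr fun i _ => Finset.prod_ne_zero_iff.mpr fun j hj => ?_).isUnit
    have : τ i < τ j := hmono (by simpa using Finset.mem_Ioi.mp hj)
    exact sub_ne_zero_of_ne this.ne'
  calc P = P * (Matrix.vandermonde τ * (Matrix.vandermonde τ)⁻¹) := by
          rw [Matrix.mul_nonsing_inv _ hdet, mul_one]
    _ = 0 := by rw [← mul_assoc, hmul, zero_mul]
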